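/- Define the Pinocchio set 𝒫_T = B_1(0) ∪ ⋃_{τ ∈ [0,T]} B_{r₀}((cos θ₀ + τ, 0)) ⊂ ℝ² for fixed θ₀ ∈ (0, π/2), r₀ = sin θ₀, and T ≥ 0. Then |𝒫_T| = |𝒫_0| + 2r₀T and P(𝒫_T) = P(𝒫_0) + 2T; consequently if P(𝒫_0)/|𝒫_0| = 1/r₀ then P(𝒫_T)/|𝒫_T| = 1/r₀ for all T ≥ 0. -/

import Mathlib

open MeasureTheory

local notation "E2" => EuclideanSpace ℝ (Fin 2)

/-- The Pinocchio set `𝒫_T = B₁(0) ∪ ⋃_{τ ∈ [0,T]} B_{r₀}((cos θ₀ + τ, 0))`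
with `r₀ = sin θ₀`. -/
noncomputable def pinocchio (θ₀ T : ℝ) : Set E2 :=
  Metric.ball (0 : E2) 1 ∪
    ⋃ τ ∈ Set.Icc (0 : ℝ) T,
      Metric.ball ((WithLp.equiv 2 (Fin 2 → ℝ)).symm ![Real.cos θ₀ + τ, 0])
        (Real.sin θ₀)

open Set
open scoped ENNReal NNReal

noncomputable def epnt (x y : ℝ) : E2 := (WithLp.equiv 2 (Fin 2 → ℝ)).symm ![x, y]

@[simp] lemma epnt_zero (x y : ℝ) : (epnt x y) 0 = x := rfl
@[simp] lemma epnt_one (x y : ℝ) : (epnt x y) 1 = y := rfl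

lemma dist_pt (p q : E2) : dist p q = Real.sqrt ((p 0 - q 0)^2 + (p 1 - q 1)^2) := by
  rw [EuclideanSpace.dist_eq]
  norm_num [Fin.sum_univ_two, Real.dist_eq, sq_abs]

lemma mem_ball_iff {p : E2} {a b ρ : ℝ} (hρ : 0 < ρ) :
    p ∈ Metric.ball (epnt a b) ρ ↔ (p 0 - a)^2 + (p 1 - b)^2 < ρ^2 := by
  rw [Metric.mem_ball, dist_pt, Real.sqrt_lt' hρ]
  simp

lemma mem_closedBall_iff {p : E2} {a b ρ : ℝ} (hρ : 0 ≤ ρ) :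
    p ∈ Metric.closedBall (epnt a b) ρ ↔ (p 0 - a)^2 + (p 1 - b)^2 ≤ ρ^2 := by
  rw [Metric.mem_closedBall, dist_pt]
  simp only [epnt_zero, epnt_one]
  constructor
  · intro h
    calc (p 0 - a)^2 + (p 1 - b)^2 = Real.sqrt ((p 0 - a)^2 + (p 1 - b)^2) ^ 2 := by
          rw [Real.sq_sqrt (by positivity)]
      _ ≤ ρ ^ 2 := by nlinarith [Real.sqrt_nonneg ((p 0 - a)^2 + (p 1 - b)^2)]
  · intro h
    calc Real.sqrt ((p 0 - a)^2 + (p 1 - b)^2) ≤ Real.sqrt (ρ^2) := Real.sqrt_le_sqrt h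
      _ = ρ := Real.sqrt_sq hρ

/-- abstract pinocchio set -/
noncomputable def Pset (c r T : ℝ) : Set E2 :=
  Metric.ball (0 : E2) 1 ∪
    ⋃ τ ∈ Set.Icc (0 : ℝ) T, Metric.ball (epnt (c + τ) 0) r

/-- the clamp of `x` to `[c, c+T]` -/
noncomputable def clmp (c T x : ℝ) : ℝ := max c (min x (c + T))

lemma clmp_mem {c T : ℝ} (hT : 0 ≤ T) (x : ℝ) : clmp c T x ∈ Set.Icc c (c + T) := by
  constructor
  · exact le_max_left _ _
  · simp only [clmp, max_le_iff, min_le_iff]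
    constructor
    · linarith
    · right; linarith

lemma clmp_le {c T x : ℝ} (hT : 0 ≤ T) {τ : ℝ} (hτ : τ ∈ Set.Icc 0 T) :
    |x - clmp c T x| ≤ |x - (c + τ)| := by
  obtain ⟨h0, h1⟩ := hτ
  rcases le_total x c with h | h
  · have : clmp c T x = c := by
      simp only [clmp, max_eq_left_iff, min_le_iff]; left; exact h
    rw [this, abs_sub_comm, abs_sub_comm x (c+τ), abs_of_nonneg (by linarith),
      abs_of_nonneg (by linarith)]
    linarith
  · rcases le_total x (c + T) with h2 | h2
    · have : clmp c T x = x := by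
        simp only [clmp, min_eq_left h2, max_eq_right h]
      simp [this, abs_nonneg]
    · have : clmp c T x = c + T := by
        simp only [clmp, min_eq_right h2, max_eq_right (by linarith : c ≤ c + T)]
      rw [this, abs_of_nonneg (by linarith), abs_of_nonneg (by linarith)]
      linarith

lemma mem_Pset {c r T : ℝ} (hr : 0 < r) (hT : 0 ≤ T) {p : E2} :
    p ∈ Pset c r T ↔
      (p 0)^2 + (p 1)^2 < 1 ∨ (p 0 - clmp c T (p 0))^2 + (p 1)^2 < r^2 := by
  have h0 : (0 : E2) = epnt 0 0 := by
    refine PiLp.ext fun i => ?_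
    fin_cases i <;> rfl
  constructor
  · rintro (h | h)
    · left
      rw [h0, mem_ball_iff one_pos] at h
      simpa using h
    · right
      simp only [Set.mem_iUnion] at h
      obtain ⟨τ, hτ, h⟩ := h
      rw [mem_ball_iff hr] at h
      have := clmp_le (x := p 0) (c := c) hT hτ
      have h2 : (p 0 - clmp c T (p 0))^2 ≤ (p 0 - (c + τ))^2 := by
        rw [← sq_abs, ← sq_abs (p 0 - (c + τ))]
        exact pow_le_pow_left₀ (abs_nonneg _) this 2
      simpa using lt_of_le_of_lt (by linarith) h
  · rintro (h | h)
    · left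
      rw [h0, mem_ball_iff one_pos]
      simpa using h
    · right
      simp only [Set.mem_iUnion]
      refine ⟨clmp c T (p 0) - c, ?_, ?_⟩
      · have := clmp_mem (c := c) hT (p 0)
        constructor <;> [linarith [this.1]; linarith [this.2]]
      · rw [mem_ball_iff hr]
        simpa using h

lemma clmp_zero (c x : ℝ) : clmp c 0 x = c := by
  simp only [clmp, add_zero, max_eq_left_iff, min_le_iff]
  right; exact le_rfl

section regions
variable {c r T : ℝ} (hc : 0 < c) (hr : 0 < r) (hcr : c^2 + r^2 = 1) (hT : 0 ≤ T)
include hc hr hcr hT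

lemma regionL {p : E2} (hp : p 0 ≤ c) : p ∈ Pset c r T ↔ p ∈ Pset c r 0 := by
  rw [mem_Pset hr hT, mem_Pset hr le_rfl, clmp_zero]
  have : clmp c T (p 0) = c := by
    simp only [clmp, max_eq_left_iff, min_le_iff]; left; exact hp
  rw [this]

lemma regionM {p : E2} (hp1 : c ≤ p 0) (hp2 : p 0 ≤ c + T) :
    p ∈ Pset c r T ↔ (p 1)^2 < r^2 := by
  rw [mem_Pset hr hT]
  have hcl : clmp c T (p 0) = p 0 := by
    simp only [clmp, min_eq_left hp2, max_eq_right hp1]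
  rw [hcl]
  constructor
  · rintro (h | h)
    · nlinarith
    · nlinarith
  · intro h; right; nlinarith

lemma regionR {p : E2} (hp : c + T ≤ p 0) :
    p ∈ Pset c r T ↔ (p 0 - (c + T))^2 + (p 1)^2 < r^2 := by
  rw [mem_Pset hr hT]
  have hcl : clmp c T (p 0) = c + T := by
    simp only [clmp, min_eq_right hp, max_eq_right (by linarith : c ≤ c + T)]
  rw [hcl]
  constructor
  · rintro (h | h)
    · nlinarith
    · exact h
  · intro h; right; exact h

end regions

set_option linter.unusedSectionVars false

lemma continuous_p0 : Continuous (fun p : E2 => p 0) := by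
  exact (continuous_apply (0 : Fin 2)).comp (PiLp.continuous_ofLp 2 (fun _ : Fin 2 => ℝ))

lemma continuous_p1 : Continuous (fun p : E2 => p 1) := by
  exact (continuous_apply (1 : Fin 2)).comp (PiLp.continuous_ofLp 2 (fun _ : Fin 2 => ℝ))

lemma isOpen_Pset (c r T : ℝ) : IsOpen (Pset c r T) :=
  (Metric.isOpen_ball).union (isOpen_biUnion fun _ _ => Metric.isOpen_ball)

noncomputable def Kset (c r T : ℝ) : Set E2 :=
  {p | (p 0)^2 + (p 1)^2 ≤ 1 ∨ (p 0 - clmp c T (p 0))^2 + (p 1)^2 ≤ r^2}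

lemma isClosed_Kset (c r T : ℝ) : IsClosed (Kset c r T) := by
  have h1 : Continuous fun p : E2 => (p 0)^2 + (p 1)^2 :=
    ((continuous_p0.pow 2).add (continuous_p1.pow 2))
  have hclmp : Continuous fun p : E2 => clmp c T (p 0) :=
    (continuous_const.max ((continuous_p0.min continuous_const)))
  have h2 : Continuous fun p : E2 => (p 0 - clmp c T (p 0))^2 + (p 1)^2 :=
    (((continuous_p0.sub hclmp).pow 2).add (continuous_p1.pow 2))
  have : Kset c r T =
      {p : E2 | (p 0)^2 + (p 1)^2 ≤ 1} ∪
        {p : E2 | (p 0 - clmp c T (p 0))^2 + (p 1)^2 ≤ r^2} := rfl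
  rw [this]
  exact (isClosed_le h1 continuous_const).union (isClosed_le h2 continuous_const)

lemma closure_Pset_subset {c r T : ℝ} (hr : 0 < r) (hT : 0 ≤ T) :
    closure (Pset c r T) ⊆ Kset c r T := by
  refine closure_minimal ?_ (isClosed_Kset c r T)
  intro p hp
  rcases (mem_Pset hr hT).1 hp with h | h
  · exact Or.inl h.le
  · exact Or.inr h.le

lemma eq_epnt {p : E2} {a b : ℝ} : p = epnt a b ↔ p 0 = a ∧ p 1 = b := by
  constructor
  · rintro rfl; exact ⟨rfl, rfl⟩
  · rintro ⟨h0, h1⟩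
    refine PiLp.ext fun i => ?_
    fin_cases i
    · exact h0
    · exact h1

lemma frontier_local {A B U : Set E2} (hU : IsOpen U) (h : A ∩ U = B ∩ U) :
    frontier A ∩ U = frontier B ∩ U := by
  have key : ∀ A B : Set E2, A ∩ U = B ∩ U → frontier A ∩ U ⊆ frontier B ∩ U := by
    intro A B hAB
    rintro x ⟨⟨hxc, hxi⟩, hxU⟩
    refine ⟨⟨?_, ?_⟩, hxU⟩
    · have : x ∈ U ∩ closure A := ⟨hxU, hxc⟩
      have := hU.inter_closure this
      rw [Set.inter_comm, hAB, Set.inter_comm] at this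
      exact closure_mono Set.inter_subset_right this
    · intro hxB
      apply hxi
      have : x ∈ interior (B ∩ U) := by
        rw [interior_inter, hU.interior_eq]
        exact ⟨hxB, hxU⟩
      rw [← hAB] at this
      exact interior_mono Set.inter_subset_left this
  exact Set.Subset.antisymm (key A B h) (key B A h.symm)

section frontier
variable {c r T : ℝ} (hc : 0 < c) (hr : 0 < r) (hcr : c^2 + r^2 = 1) (hT : 0 ≤ T)
include hc hr hcr hT

lemma seg_mem_frontier {x b : ℝ} (hx : x ∈ Set.Icc c (c + T)) (hb : b = r ∨ b = -r) :
    epnt x b ∈ frontier (Pset c r T) := by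
  rw [(isOpen_Pset c r T).frontier_eq]
  constructor
  · -- in closure: via closed ball at (x, 0)
    have hball : Metric.ball (epnt x 0) r ⊆ Pset c r T := by
      intro q hq
      right
      refine Set.mem_biUnion (show x - c ∈ Set.Icc 0 T from
        ⟨by linarith [hx.1], by linarith [hx.2]⟩) ?_
      simpa [show c + (x - c) = x by ring] using hq
    refine closure_mono hball ?_
    rw [closure_ball _ (ne_of_gt hr)]
    rw [mem_closedBall_iff hr.le]
    have : b^2 = r^2 := by rcases hb with rfl | rfl <;> ring
    simp [this]
  · -- not in Pset
    intro hmem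
    have := (regionM hc hr hcr hT hx.1 hx.2).1 hmem
    have hb2 : b^2 = r^2 := by rcases hb with rfl | rfl <;> ring
    simp only [epnt_one] at this
    rw [hb2] at this
    exact lt_irrefl _ this

lemma frontier_line {x : ℝ} (hx : x = c ∨ x = c + T) :
    frontier (Pset c r T) ∩ {p : E2 | p 0 = x} = {epnt x r, epnt x (-r)} := by
  have hxm : x ∈ Set.Icc c (c + T) := by
    rcases hx with rfl | rfl
    · exact ⟨le_rfl, by linarith⟩
    · exact ⟨by linarith, le_rfl⟩
  apply Set.Subset.antisymm
  · rintro p ⟨hpf, hp0⟩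
    simp only [Set.mem_setOf_eq] at hp0
    rw [(isOpen_Pset c r T).frontier_eq] at hpf
    obtain ⟨hpc, hpn⟩ := hpf
    have hK := closure_Pset_subset hr hT hpc
    have hcl : clmp c T (p 0) = p 0 := by
      simp only [clmp, hp0, min_eq_left hxm.2, max_eq_right hxm.1]
    have hle : (p 1)^2 ≤ r^2 := by
      rcases hK with h | h
      · -- p0² + p1² ≤ 1 and p0 = x ≥ c > 0
        have : c^2 ≤ (p 0)^2 := by nlinarith [hxm.1, hp0.ge, hp0.le]
        nlinarith
      · rw [hcl] at h; nlinarith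
    have hge : ¬ (p 1)^2 < r^2 := fun hlt =>
      hpn ((regionM hc hr hcr hT (hp0 ▸ hxm.1) (hp0 ▸ hxm.2)).2 hlt)
    have heq : (p 1)^2 = r^2 := le_antisymm hle (not_lt.1 hge)
    have : p 1 = r ∨ p 1 = -r := sq_eq_sq_iff_eq_or_eq_neg.1 heq
    rcases this with h1 | h1
    · left; exact eq_epnt.2 ⟨hp0, h1⟩
    · right; exact eq_epnt.2 ⟨hp0, h1⟩
  · rintro p (rfl | rfl)
    · exact ⟨seg_mem_frontier hc hr hcr hT hxm (Or.inl rfl), rfl⟩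
    · exact ⟨seg_mem_frontier hc hr hcr hT hxm (Or.inr rfl), rfl⟩

lemma frontier_mid :
    frontier (Pset c r T) ∩ {p : E2 | c ≤ p 0 ∧ p 0 ≤ c + T} =
      (fun t => epnt t r) '' Set.Icc c (c + T) ∪
        (fun t => epnt t (-r)) '' Set.Icc c (c + T) := by
  apply Set.Subset.antisymm
  · rintro p ⟨hpf, hp1, hp2⟩
    rw [(isOpen_Pset c r T).frontier_eq] at hpf
    obtain ⟨hpc, hpn⟩ := hpf
    have hK := closure_Pset_subset hr hT hpc
    have hcl : clmp c T (p 0) = p 0 := by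
      simp only [clmp, min_eq_left hp2, max_eq_right hp1]
    have hle : (p 1)^2 ≤ r^2 := by
      rcases hK with h | h
      · nlinarith
      · rw [hcl] at h; nlinarith
    have hge : ¬ (p 1)^2 < r^2 := fun hlt =>
      hpn ((regionM hc hr hcr hT hp1 hp2).2 hlt)
    have heq : (p 1)^2 = r^2 := le_antisymm hle (not_lt.1 hge)
    rcases sq_eq_sq_iff_eq_or_eq_neg.1 heq with h1 | h1
    · left; exact ⟨p 0, ⟨hp1, hp2⟩, (eq_epnt.2 ⟨rfl, h1⟩).symm⟩
    · right; exact ⟨p 0, ⟨hp1, hp2⟩, (eq_epnt.2 ⟨rfl, h1⟩).symm⟩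
  · rintro p (⟨t, ht, rfl⟩ | ⟨t, ht, rfl⟩)
    · exact ⟨seg_mem_frontier hc hr hcr hT ht (Or.inl rfl), ht.1, ht.2⟩
    · exact ⟨seg_mem_frontier hc hr hcr hT ht (Or.inr rfl), ht.1, ht.2⟩

end frontier

lemma translate_isometry (v : E2) : Isometry (fun p : E2 => p + v) :=
  Isometry.of_dist_eq fun a b => by simp [dist_add_right]

lemma sub_coord (p v : E2) (i : Fin 2) : (p - v) i = p i - v i := rfl
lemma add_coord (p v : E2) (i : Fin 2) : (p + v) i = p i + v i := rfl

lemma mem_translate {A : Set E2} {v p : E2} :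
    p ∈ (fun q : E2 => q + v) '' A ↔ p - v ∈ A := by
  constructor
  · rintro ⟨q, hq, rfl⟩; simpa using hq
  · intro h; exact ⟨p - v, h, sub_add_cancel p v⟩

section main
variable {c r T : ℝ} (hc : 0 < c) (hr : 0 < r) (hcr : c^2 + r^2 = 1) (hT : 0 ≤ T)
include hc hr hcr hT

lemma frontier_left :
    frontier (Pset c r T) ∩ {p : E2 | p 0 ≤ c} =
      frontier (Pset c r 0) ∩ {p : E2 | p 0 ≤ c} := by
  have hU : IsOpen {p : E2 | p 0 < c} := isOpen_lt continuous_p0 continuous_const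
  have hloc : Pset c r T ∩ {p : E2 | p 0 < c} = Pset c r 0 ∩ {p : E2 | p 0 < c} := by
    ext p
    simp only [Set.mem_inter_iff, Set.mem_setOf_eq]
    exact and_congr_left fun hp => regionL hc hr hcr hT hp.le
  have hfr := frontier_local hU hloc
  have key : ∀ S : Set E2, S ∩ {p : E2 | p 0 ≤ c} =
      (S ∩ {p : E2 | p 0 < c}) ∪ (S ∩ {p : E2 | p 0 = c}) := by
    intro S
    ext p
    simp only [Set.mem_inter_iff, Set.mem_union, Set.mem_setOf_eq]
    constructor
    · rintro ⟨h1, h2⟩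
      rcases lt_or_eq_of_le h2 with h | h
      · exact Or.inl ⟨h1, h⟩
      · exact Or.inr ⟨h1, h⟩
    · rintro (⟨h1, h2⟩ | ⟨h1, h2⟩)
      · exact ⟨h1, h2.le⟩
      · exact ⟨h1, h2.le⟩
  rw [key, key, hfr, frontier_line hc hr hcr hT (Or.inl rfl),
    frontier_line hc hr hcr le_rfl (Or.inl rfl)]

lemma Pset_translate :
    Pset c r T ∩ {p : E2 | c + T ≤ p 0} =
      (fun q : E2 => q + epnt T 0) '' (Pset c r 0 ∩ {p : E2 | c ≤ p 0}) := by
  ext p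
  rw [mem_translate]
  have h0 : (p - epnt T 0) 0 = p 0 - T := by rw [sub_coord]; simp
  have h1 : (p - epnt T 0) 1 = p 1 := by rw [sub_coord]; simp
  simp only [Set.mem_inter_iff, Set.mem_setOf_eq, h0, h1]
  constructor
  · rintro ⟨hp, hple⟩
    have := (regionR hc hr hcr hT hple).1 hp
    refine ⟨(regionR hc hr hcr le_rfl (by linarith)).2 ?_, by linarith⟩
    rw [h0, h1]
    convert this using 3 <;> ring
  · rintro ⟨hp, hple⟩
    have := (regionR hc hr hcr le_rfl (by linarith)).1 hp
    rw [h0, h1] at this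
    refine ⟨(regionR hc hr hcr hT (by linarith)).2 ?_, by linarith⟩
    convert this using 3 <;> ring

lemma frontier_right :
    frontier (Pset c r T) ∩ {p : E2 | c + T ≤ p 0} =
      (fun q : E2 => q + epnt T 0) '' (frontier (Pset c r 0) ∩ {p : E2 | c ≤ p 0}) := by
  set v : E2 := epnt T 0 with hv
  have hhom : ∀ S : Set E2, frontier ((fun q : E2 => q + v) '' S) =
      (fun q : E2 => q + v) '' frontier S := by
    intro S
    exact ((Homeomorph.addRight v).image_frontier S).symm
  have hU : IsOpen {p : E2 | c + T < p 0} := isOpen_lt continuous_const continuous_p0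
  have hloc : Pset c r T ∩ {p : E2 | c + T < p 0} =
      ((fun q : E2 => q + v) '' Pset c r 0) ∩ {p : E2 | c + T < p 0} := by
    have := Pset_translate hc hr hcr hT
    ext p
    simp only [Set.mem_inter_iff, Set.mem_setOf_eq]
    constructor
    · rintro ⟨hp, hplt⟩
      have := (Set.ext_iff.1 (Pset_translate hc hr hcr hT) p).1 ⟨hp, hplt.le⟩
      exact ⟨(Set.image_mono Set.inter_subset_left) this, hplt⟩
    · rintro ⟨hp, hplt⟩
      rw [mem_translate] at hp
      have h0 : (p - v) 0 = p 0 - T := by rw [sub_coord]; simp [hv]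
      have hmem : p - v ∈ Pset c r 0 ∩ {p : E2 | c ≤ p 0} := by
        refine ⟨hp, ?_⟩
        simp only [Set.mem_setOf_eq, h0]; linarith
      have := (Set.ext_iff.1 (Pset_translate hc hr hcr hT) p).2 (mem_translate.2 hmem)
      exact ⟨this.1, hplt⟩
  have hfr := frontier_local hU hloc
  rw [hhom] at hfr
  -- split closed half plane into open part and line
  have key : ∀ (S : Set E2) (a : ℝ), S ∩ {p : E2 | a ≤ p 0} =
      (S ∩ {p : E2 | a < p 0}) ∪ (S ∩ {p : E2 | p 0 = a}) := by
    intro S a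
    ext p
    simp only [Set.mem_inter_iff, Set.mem_union, Set.mem_setOf_eq]
    constructor
    · rintro ⟨h1, h2⟩
      rcases eq_or_lt_of_le h2 with h | h
      · exact Or.inr ⟨h1, h.symm⟩
      · exact Or.inl ⟨h1, h⟩
    · rintro (⟨h1, h2⟩ | ⟨h1, h2⟩)
      · exact ⟨h1, h2.le⟩
      · exact ⟨h1, h2.ge⟩
  rw [key _ (c + T), key _ c, hfr, Set.image_union]
  congr 1
  · -- open parts: image of frontier P0 ∩ {c < p0}
    ext p
    rw [Set.mem_inter_iff, mem_translate, mem_translate]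
    have h0 : (p - v) 0 = p 0 - T := by rw [sub_coord]; simp [hv]
    simp only [Set.mem_inter_iff, Set.mem_setOf_eq, h0]
    constructor
    · rintro ⟨h1, h2⟩; exact ⟨h1, by linarith⟩
    · rintro ⟨h1, h2⟩; exact ⟨h1, by linarith⟩
  · -- lines
    rw [frontier_line hc hr hcr hT (Or.inr rfl)]
    have : frontier (Pset c r 0) ∩ {p : E2 | p 0 = c} = {epnt c r, epnt c (-r)} :=
      frontier_line hc hr hcr le_rfl (Or.inl rfl)
    rw [this]
    ext p
    rw [Set.mem_insert_iff, Set.mem_singleton_iff, mem_translate]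
    simp only [Set.mem_insert_iff, Set.mem_singleton_iff]
    have hsub : ∀ a b : ℝ, p - v = epnt a b ↔ p = epnt (a + T) b := by
      intro a b
      rw [eq_epnt, eq_epnt, sub_coord, sub_coord]
      simp only [hv, epnt_zero, epnt_one]
      constructor
      · rintro ⟨h1, h2⟩; exact ⟨by linarith, by linarith⟩
      · rintro ⟨h1, h2⟩; exact ⟨by linarith, by linarith⟩
    rw [hsub, hsub]

end main

-- ### measure helpers

lemma measurable_half_lt (a : ℝ) : MeasurableSet {p : E2 | p 0 < a} :=
  measurableSet_lt continuous_p0.measurable measurable_const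

lemma measurable_half_le (a : ℝ) : MeasurableSet {p : E2 | p 0 ≤ a} :=
  measurableSet_le continuous_p0.measurable measurable_const

lemma measurable_half_ge (a : ℝ) : MeasurableSet {p : E2 | a ≤ p 0} :=
  measurableSet_le measurable_const continuous_p0.measurable

lemma pair_null (x y : E2) : μH[(1:ℝ)] ({x, y} : Set E2) = 0 := by
  have : NullSingletonClass (μH[(1:ℝ)] : Measure E2) := Measure.noAtoms_hausdorff E2 one_pos
  exact Set.Countable.measure_zero ((Set.countable_singleton _).insert _) _

lemma volume_translate (v : E2) (S : Set E2) :
    volume ((fun q : E2 => q + v) '' S) = volume S := by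
  have h : (fun q : E2 => q + v) '' S = (fun q : E2 => q + (-v)) ⁻¹' S := by
    ext p
    rw [mem_translate]
    simp [Set.mem_preimage, sub_eq_add_neg]
  rw [h, measure_preimage_add_right]

lemma hausdorff_translate (v : E2) (S : Set E2) :
    μH[(1:ℝ)] ((fun q : E2 => q + v) '' S) = μH[(1:ℝ)] S :=
  (translate_isometry v).hausdorffMeasure_image (Or.inl zero_le_one) S

lemma seg_isometry (b : ℝ) : Isometry (fun t : ℝ => epnt t b) := by
  refine Isometry.of_dist_eq fun s t => ?_
  rw [dist_pt, Real.dist_eq]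
  simp [Real.sqrt_sq_eq_abs]

lemma hausdorff_seg (b x y : ℝ) (hxy : x ≤ y) :
    μH[(1:ℝ)] ((fun t : ℝ => epnt t b) '' Set.Icc x y) = ENNReal.ofReal (y - x) := by
  rw [(seg_isometry b).hausdorffMeasure_image (Or.inl zero_le_one),
    MeasureTheory.hausdorffMeasure_real, Real.volume_Icc]

lemma measurable_seg (b x y : ℝ) :
    MeasurableSet ((fun t : ℝ => epnt t b) '' Set.Icc x y) :=
  (isCompact_Icc.image (seg_isometry b).continuous).isClosed.measurableSet

lemma measure_union3 {μ : Measure E2} {A B C : Set E2} (hB : MeasurableSet B)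
    (hC : MeasurableSet C) (hAB : μ (A ∩ B) = 0) (hAC : μ (A ∩ C) = 0)
    (hBC : μ (B ∩ C) = 0) : μ (A ∪ B ∪ C) = μ A + μ B + μ C := by
  have h1 : μ (A ∪ B) = μ A + μ B := by
    have := measure_union_add_inter A hB (μ := μ)
    rwa [hAB, add_zero] at this
  have h2 : μ ((A ∪ B) ∩ C) = 0 := by
    have hsub : (A ∪ B) ∩ C ⊆ (A ∩ C) ∪ (B ∩ C) := by
      rintro p ⟨(h | h), hC'⟩
      · exact Or.inl ⟨h, hC'⟩
      · exact Or.inr ⟨h, hC'⟩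
    refine le_antisymm (le_trans (measure_mono hsub) ?_) (zero_le)
    calc μ ((A ∩ C) ∪ (B ∩ C)) ≤ μ (A ∩ C) + μ (B ∩ C) := measure_union_le _ _
      _ = 0 := by rw [hAC, hBC, add_zero]
  have := measure_union_add_inter (A ∪ B) hC (μ := μ)
  rw [h2, add_zero, h1] at this
  exact this

lemma volume_rect {a b r : ℝ} :
    volume {p : E2 | (a ≤ p 0 ∧ p 0 < b) ∧ (-r < p 1 ∧ p 1 < r)} =
      ENNReal.ofReal (b - a) * ENNReal.ofReal (2 * r) := by
  have hpre : {p : E2 | (a ≤ p 0 ∧ p 0 < b) ∧ (-r < p 1 ∧ p 1 < r)} =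
      (MeasurableEquiv.toLp 2 (Fin 2 → ℝ)).symm ⁻¹'
        (Set.univ.pi ![Set.Ico a b, Set.Ioo (-r) r]) := by
    ext p
    simp only [Set.mem_setOf_eq, Set.mem_preimage, Set.mem_pi, Set.mem_univ,
      forall_true_left]
    rw [Fin.forall_fin_two]
    simp only [Matrix.cons_val_zero, Matrix.cons_val_one, Matrix.head_cons,
      Set.mem_Ico, Set.mem_Ioo]
    exact Iff.rfl
  rw [hpre, (EuclideanSpace.volume_preserving_symm_measurableEquiv_toLp (Fin 2)).measure_preimage
    ((MeasurableSet.univ_pi fun i => ?_).nullMeasurableSet), volume_pi_pi]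
  · rw [Fin.prod_univ_two]
    simp only [Matrix.cons_val_zero, Matrix.cons_val_one, Matrix.head_cons,
      Real.volume_Ico, Real.volume_Ioo]
    congr 1
    ring_nf
  · fin_cases i
    · exact measurableSet_Ico
    · exact measurableSet_Ioo

section compute
variable {c r T : ℝ} (hc : 0 < c) (hr : 0 < r) (hcr : c^2 + r^2 = 1) (hT : 0 ≤ T)
include hc hr hcr hT

lemma volume_Pset :
    volume (Pset c r T) = volume (Pset c r 0) + ENNReal.ofReal (2 * r * T) := by
  set X1 : Set E2 := {p : E2 | p 0 < c} with hX1
  set X2 : Set E2 := {p : E2 | c ≤ p 0 ∧ p 0 < c + T} with hX2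
  set X3 : Set E2 := {p : E2 | c + T ≤ p 0} with hX3
  set P : Set E2 := Pset c r T with hP
  have hcov : P = (P ∩ X1) ∪ (P ∩ X2) ∪ (P ∩ X3) := by
    ext p
    simp only [Set.mem_union, Set.mem_inter_iff, hX1, hX2, hX3, Set.mem_setOf_eq]
    constructor
    · intro hp
      rcases lt_or_ge (p 0) c with h | h
      · exact Or.inl (Or.inl ⟨hp, h⟩)
      · rcases lt_or_ge (p 0) (c + T) with h2 | h2
        · exact Or.inl (Or.inr ⟨hp, h, h2⟩)
        · exact Or.inr ⟨hp, h2⟩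
    · rintro ((⟨h, _⟩ | ⟨h, _⟩) | ⟨h, _⟩) <;> exact h
  have hPmeas : MeasurableSet P := (isOpen_Pset c r T).measurableSet
  have hmB : MeasurableSet (P ∩ X2) :=
    hPmeas.inter ((measurable_half_ge c).inter (measurable_half_lt (c + T)))
  have hmC : MeasurableSet (P ∩ X3) := hPmeas.inter (measurable_half_ge (c + T))
  have hvol : volume P = volume (P ∩ X1) + volume (P ∩ X2) + volume (P ∩ X3) := by
    conv_lhs => rw [hcov]
    refine measure_union3 hmB hmC ?_ ?_ ?_ <;>
    · refine measure_mono_null ?_ (measure_empty (μ := volume))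
      rintro p ⟨⟨_, h1⟩, ⟨_, h2⟩⟩
      simp only [hX1, hX2, hX3, Set.mem_setOf_eq] at h1 h2
      exfalso
      first
      | exact absurd h2.1 (not_le.2 h1)
      | (exact absurd h2 (not_le.2 (h1.trans_le (by linarith))))
      | linarith [h1.2, h2]
  -- piece 1
  have hp1 : P ∩ X1 = Pset c r 0 ∩ X1 := by
    ext p
    simp only [Set.mem_inter_iff, hX1, Set.mem_setOf_eq]
    exact and_congr_left fun hp => regionL hc hr hcr hT hp.le
  -- piece 2
  have hp2 : P ∩ X2 = {p : E2 | (c ≤ p 0 ∧ p 0 < c + T) ∧ (-r < p 1 ∧ p 1 < r)} := by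
    ext p
    simp only [Set.mem_inter_iff, hX2, Set.mem_setOf_eq]
    constructor
    · rintro ⟨hp, h1, h2⟩
      have := (regionM hc hr hcr hT h1 h2.le).1 hp
      exact ⟨⟨h1, h2⟩, by nlinarith, by nlinarith⟩
    · rintro ⟨⟨h1, h2⟩, h3, h4⟩
      exact ⟨(regionM hc hr hcr hT h1 h2.le).2 (by nlinarith), h1, h2⟩
  -- piece 3
  have hp3 : volume (P ∩ X3) = volume (Pset c r 0 ∩ {p : E2 | c ≤ p 0}) := by
    rw [hP, hX3, Pset_translate hc hr hcr hT, volume_translate]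
  -- volume of Pset c r 0 split
  have hsplit : volume (Pset c r 0) =
      volume (Pset c r 0 ∩ X1) + volume (Pset c r 0 ∩ {p : E2 | c ≤ p 0}) := by
    have hcov0 : Pset c r 0 = (Pset c r 0 ∩ X1) ∪ (Pset c r 0 ∩ {p : E2 | c ≤ p 0}) := by
      ext p
      simp only [Set.mem_union, Set.mem_inter_iff, hX1, Set.mem_setOf_eq]
      constructor
      · intro hp
        rcases lt_or_ge (p 0) c with h | h
        · exact Or.inl ⟨hp, h⟩
        · exact Or.inr ⟨hp, h⟩
      · rintro (⟨h, _⟩ | ⟨h, _⟩) <;> exact h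
    conv_lhs => rw [hcov0]
    refine measure_union ?_ (((isOpen_Pset c r 0).measurableSet).inter (measurable_half_ge c))
    rw [Set.disjoint_left]
    rintro p ⟨_, h1⟩ ⟨_, h2⟩
    simp only [hX1, Set.mem_setOf_eq] at h1
    simp only [Set.mem_setOf_eq] at h2
    linarith
  rw [hvol, hp1, hp2, hp3, volume_rect, hsplit]
  have : ENNReal.ofReal (c + T - c) * ENNReal.ofReal (2 * r) =
      ENNReal.ofReal (2 * r * T) := by
    rw [← ENNReal.ofReal_mul (by linarith)]
    congr 1
    ring
  rw [this]
  ring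

lemma hausdorff_Pset :
    μH[(1:ℝ)] (frontier (Pset c r T)) =
      μH[(1:ℝ)] (frontier (Pset c r 0)) + ENNReal.ofReal (2 * T) := by
  set F : Set E2 := frontier (Pset c r T) with hF
  set F0 : Set E2 := frontier (Pset c r 0) with hF0
  set Y1 : Set E2 := {p : E2 | p 0 ≤ c} with hY1
  set Y2 : Set E2 := {p : E2 | c ≤ p 0 ∧ p 0 ≤ c + T} with hY2
  set Y3 : Set E2 := {p : E2 | c + T ≤ p 0} with hY3
  have hFc : IsClosed F := isClosed_frontier
  have hF0c : IsClosed F0 := isClosed_frontier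
  have hcov : F = (F ∩ Y1) ∪ (F ∩ Y2) ∪ (F ∩ Y3) := by
    ext p
    simp only [Set.mem_union, Set.mem_inter_iff, hY1, hY2, hY3, Set.mem_setOf_eq]
    constructor
    · intro hp
      rcases le_or_gt (p 0) c with h | h
      · exact Or.inl (Or.inl ⟨hp, h⟩)
      · rcases le_or_gt (p 0) (c + T) with h2 | h2
        · exact Or.inl (Or.inr ⟨hp, h.le, h2⟩)
        · exact Or.inr ⟨hp, h2.le⟩
    · rintro ((⟨h, _⟩ | ⟨h, _⟩) | ⟨h, _⟩) <;> exact h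
  have hmB : MeasurableSet (F ∩ Y2) :=
    hFc.measurableSet.inter ((measurable_half_ge c).inter (measurable_half_le (c + T)))
  have hmC : MeasurableSet (F ∩ Y3) := hFc.measurableSet.inter (measurable_half_ge (c + T))
  have hlinec : F ∩ {p : E2 | p 0 = c} = {epnt c r, epnt c (-r)} :=
    frontier_line hc hr hcr hT (Or.inl rfl)
  have hlinecT : F ∩ {p : E2 | p 0 = c + T} = {epnt (c + T) r, epnt (c + T) (-r)} :=
    frontier_line hc hr hcr hT (Or.inr rfl)
  have hAB : μH[(1:ℝ)] ((F ∩ Y1) ∩ (F ∩ Y2)) = 0 := by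
    refine measure_mono_null (fun p hp => ?_) (pair_null (epnt c r) (epnt c (-r)))
    rw [← hlinec]
    obtain ⟨⟨hpF, h1⟩, ⟨_, h2, _⟩⟩ := hp
    exact ⟨hpF, le_antisymm h1 h2⟩
  have hAC : μH[(1:ℝ)] ((F ∩ Y1) ∩ (F ∩ Y3)) = 0 := by
    refine measure_mono_null (fun p hp => ?_) (pair_null (epnt c r) (epnt c (-r)))
    rw [← hlinec]
    obtain ⟨⟨hpF, h1⟩, ⟨_, h2⟩⟩ := hp
    simp only [hY1, hY3, Set.mem_setOf_eq] at h1 h2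
    exact ⟨hpF, le_antisymm h1 (by linarith)⟩
  have hBC : μH[(1:ℝ)] ((F ∩ Y2) ∩ (F ∩ Y3)) = 0 := by
    refine measure_mono_null (fun p hp => ?_) (pair_null (epnt (c + T) r) (epnt (c + T) (-r)))
    rw [← hlinecT]
    obtain ⟨⟨hpF, _, h1⟩, ⟨_, h2⟩⟩ := hp
    exact ⟨hpF, le_antisymm h1 h2⟩
  have htot : μH[(1:ℝ)] F = μH[(1:ℝ)] (F ∩ Y1) + μH[(1:ℝ)] (F ∩ Y2) + μH[(1:ℝ)] (F ∩ Y3) := by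
    conv_lhs => rw [hcov]
    exact measure_union3 hmB hmC hAB hAC hBC
  -- piece 1
  have hp1 : F ∩ Y1 = F0 ∩ Y1 := frontier_left hc hr hcr hT
  -- piece 2
  have hp2 : μH[(1:ℝ)] (F ∩ Y2) = ENNReal.ofReal (2 * T) := by
    have : F ∩ Y2 = (fun t => epnt t r) '' Set.Icc c (c + T) ∪
        (fun t => epnt t (-r)) '' Set.Icc c (c + T) := by
      rw [hF, hY2]
      exact frontier_mid hc hr hcr hT
    rw [this, measure_union ?_ (measurable_seg (-r) c (c + T)), hausdorff_seg,
      hausdorff_seg]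
    · rw [← ENNReal.ofReal_add (by linarith) (by linarith)]
      congr 1
      ring
    · linarith
    · linarith
    · rw [Set.disjoint_left]
      rintro p ⟨t, _, rfl⟩ ⟨s, _, hs⟩
      have := (eq_epnt.1 hs.symm).2
      simp only [epnt_one] at this
      linarith
  -- piece 3
  have hp3 : μH[(1:ℝ)] (F ∩ Y3) = μH[(1:ℝ)] (F0 ∩ {p : E2 | c ≤ p 0}) := by
    rw [hF, hY3, frontier_right hc hr hcr hT, hausdorff_translate]
  -- split F0
  have hsplit : μH[(1:ℝ)] F0 = μH[(1:ℝ)] (F0 ∩ Y1) + μH[(1:ℝ)] (F0 ∩ {p : E2 | c ≤ p 0}) := by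
    have hcov0 : F0 = (F0 ∩ Y1) ∪ (F0 ∩ {p : E2 | c ≤ p 0}) := by
      ext p
      simp only [Set.mem_union, Set.mem_inter_iff, hY1, Set.mem_setOf_eq]
      constructor
      · intro hp
        rcases le_or_gt (p 0) c with h | h
        · exact Or.inl ⟨hp, h⟩
        · exact Or.inr ⟨hp, h.le⟩
      · rintro (⟨h, _⟩ | ⟨h, _⟩) <;> exact h
    have hint : μH[(1:ℝ)] ((F0 ∩ Y1) ∩ (F0 ∩ {p : E2 | c ≤ p 0})) = 0 := by
      refine measure_mono_null (fun p hp => ?_) (pair_null (epnt c r) (epnt c (-r)))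
      rw [← frontier_line hc hr hcr le_rfl (Or.inl rfl)]
      obtain ⟨⟨hpF, h1⟩, ⟨_, h2⟩⟩ := hp
      exact ⟨hpF, le_antisymm h1 h2⟩
    have := measure_union_add_inter (μ := μH[(1:ℝ)]) (F0 ∩ Y1)
      (hF0c.measurableSet.inter (measurable_half_ge c))
    rw [hint, add_zero] at this
    conv_lhs => rw [hcov0]
    exact this
  rw [htot, hp1, hp2, hp3]
  rw [hsplit]
  ring

end compute

lemma zero_eq_epnt : (0 : E2) = epnt 0 0 := by
  refine PiLp.ext fun i => ?_
  fin_cases i <;> rfl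

lemma chord_bound (x y : ℝ) :
    (Real.cos x - Real.cos y)^2 + (Real.sin x - Real.sin y)^2 ≤ (x - y)^2 := by
  have h1 := Real.one_sub_sq_div_two_le_cos (x := x - y)
  have h2 := Real.sin_sq_add_cos_sq x
  have h3 := Real.sin_sq_add_cos_sq y
  have h4 := Real.cos_sub x y
  nlinarith

lemma circle_lipschitz (a ρ : ℝ) (h0 : 0 ≤ ρ) (h1 : ρ ≤ 1) :
    LipschitzWith 1 (fun θ : ℝ => epnt (a + ρ * Real.cos θ) (ρ * Real.sin θ)) := by
  refine LipschitzWith.of_dist_le_mul fun x y => ?_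
  rw [dist_pt, Real.dist_eq]
  simp only [epnt_zero, epnt_one, NNReal.coe_one, one_mul]
  rw [show |x - y| = Real.sqrt ((x - y)^2) from (Real.sqrt_sq_eq_abs _).symm]
  apply Real.sqrt_le_sqrt
  have hch := chord_bound x y
  have hρ2 : ρ^2 ≤ 1 := by nlinarith
  have expand : (a + ρ * Real.cos x - (a + ρ * Real.cos y))^2 +
      (ρ * Real.sin x - ρ * Real.sin y)^2 =
      ρ^2 * ((Real.cos x - Real.cos y)^2 + (Real.sin x - Real.sin y)^2) := by ring
  rw [expand]
  nlinarith [sq_nonneg (Real.cos x - Real.cos y), sq_nonneg (Real.sin x - Real.sin y)]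

lemma sphere_subset_image (a ρ : ℝ) (hρ : 0 < ρ) :
    Metric.sphere (epnt a 0) ρ ⊆
      (fun θ : ℝ => epnt (a + ρ * Real.cos θ) (ρ * Real.sin θ)) ''
        Set.Icc 0 (2 * Real.pi) := by
  intro p hp
  have hd : dist p (epnt a 0) = ρ := hp
  rw [dist_pt] at hd
  simp only [epnt_zero, epnt_one, sub_zero] at hd
  have hsq : (p 0 - a)^2 + (p 1)^2 = ρ^2 := by
    have := congrArg (fun t => t^2) hd
    simpa [Real.sq_sqrt (by positivity : (0:ℝ) ≤ (p 0 - a)^2 + (p 1)^2)] using this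
  set u := (p 0 - a) / ρ with hu
  set w := (p 1) / ρ with hw
  have huw : u^2 + w^2 = 1 := by
    rw [hu, hw]
    field_simp
    linarith [hsq]
  have hu1 : -1 ≤ u := by nlinarith
  have hu2 : u ≤ 1 := by nlinarith
  have hcos : Real.cos (Real.arccos u) = u := Real.cos_arccos hu1 hu2
  have hsin : Real.sin (Real.arccos u) = Real.sqrt (1 - u^2) := Real.sin_arccos u
  have hw2 : Real.sqrt (1 - u^2) = |w| := by
    rw [show 1 - u^2 = w^2 by linarith, Real.sqrt_sq_eq_abs]
  have hmem : Real.arccos u ∈ Set.Icc 0 Real.pi := ⟨Real.arccos_nonneg u, Real.arccos_le_pi u⟩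
  have hpi := Real.pi_pos
  rcases le_or_gt 0 w with hwpos | hwneg
  · refine ⟨Real.arccos u, ⟨hmem.1, by linarith [hmem.2]⟩, ?_⟩
    refine (eq_epnt.2 ⟨?_, ?_⟩).symm
    · rw [hcos, hu]; field_simp; ring
    · rw [hsin, hw2, abs_of_nonneg hwpos, hw]; field_simp
  · refine ⟨2 * Real.pi - Real.arccos u, ⟨by linarith [hmem.2], by linarith [hmem.1]⟩, ?_⟩
    have hc2 : Real.cos (2 * Real.pi - Real.arccos u) = u := by
      simp [Real.cos_sub, Real.cos_two_pi, Real.sin_two_pi, hcos]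
    have hs2 : Real.sin (2 * Real.pi - Real.arccos u) = -Real.sqrt (1 - u^2) := by
      simp [Real.sin_sub, Real.cos_two_pi, Real.sin_two_pi, hsin]
    refine (eq_epnt.2 ⟨?_, ?_⟩).symm
    · rw [hc2, hu]; field_simp; ring
    · rw [hs2, hw2, abs_of_neg hwneg, hw]; field_simp

lemma sphere_hausdorff_finite (a ρ : ℝ) (h0 : 0 < ρ) (h1 : ρ ≤ 1) :
    μH[(1:ℝ)] (Metric.sphere (epnt a 0) ρ) < ⊤ := by
  calc μH[(1:ℝ)] (Metric.sphere (epnt a 0) ρ)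
      ≤ μH[(1:ℝ)] ((fun θ : ℝ => epnt (a + ρ * Real.cos θ) (ρ * Real.sin θ)) ''
        Set.Icc 0 (2 * Real.pi)) := measure_mono (sphere_subset_image a ρ h0)
    _ ≤ ((1 : ℝ≥0) : ℝ≥0∞) ^ (1:ℝ) * μH[(1:ℝ)] (Set.Icc 0 (2 * Real.pi)) :=
        (circle_lipschitz a ρ h0.le h1).hausdorffMeasure_image_le zero_le_one _
    _ = volume (Set.Icc 0 (2 * Real.pi)) := by
        rw [MeasureTheory.hausdorffMeasure_real]; simp
    _ < ⊤ := by rw [Real.volume_Icc]; exact ENNReal.ofReal_lt_top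

section finiteness
variable {c r : ℝ} (hc : 0 < c) (hr : 0 < r) (hcr : c^2 + r^2 = 1)
include hc hr hcr

lemma frontier_P0_subset :
    frontier (Pset c r 0) ⊆ Metric.sphere (epnt 0 0) 1 ∪ Metric.sphere (epnt c 0) r := by
  have hP : Pset c r 0 = Metric.ball (epnt 0 0) 1 ∪ Metric.ball (epnt c 0) r := by
    rw [Pset, ← zero_eq_epnt]
    congr 1
    rw [Set.Icc_self]
    simp
  have hcl : closure (Pset c r 0) ⊆
      Metric.closedBall (epnt 0 0) 1 ∪ Metric.closedBall (epnt c 0) r := by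
    rw [hP, closure_union, closure_ball _ (one_ne_zero), closure_ball _ (ne_of_gt hr)]
  rw [(isOpen_Pset c r 0).frontier_eq]
  rintro p ⟨hpc, hpn⟩
  rw [hP] at hpn
  simp only [Set.mem_union, not_or] at hpn
  rcases hcl hpc with h | h
  · left
    rcases lt_or_eq_of_le (Metric.mem_closedBall.1 h) with h2 | h2
    · exact absurd (Metric.mem_ball.2 h2) hpn.1
    · exact Metric.mem_sphere.2 h2
  · right
    rcases lt_or_eq_of_le (Metric.mem_closedBall.1 h) with h2 | h2
    · exact absurd (Metric.mem_ball.2 h2) hpn.2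
    · exact Metric.mem_sphere.2 h2

lemma hausdorff_P0_ne_top : μH[(1:ℝ)] (frontier (Pset c r 0)) ≠ ⊤ := by
  have hr1 : r ≤ 1 := by nlinarith
  have := calc μH[(1:ℝ)] (frontier (Pset c r 0))
      ≤ μH[(1:ℝ)] (Metric.sphere (epnt 0 0) 1 ∪ Metric.sphere (epnt c 0) r) :=
        measure_mono (frontier_P0_subset hc hr hcr)
    _ ≤ μH[(1:ℝ)] (Metric.sphere (epnt 0 0) 1) + μH[(1:ℝ)] (Metric.sphere (epnt c 0) r) :=
        measure_union_le _ _
    _ < ⊤ := ENNReal.add_lt_top.2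
        ⟨sphere_hausdorff_finite 0 1 one_pos le_rfl, sphere_hausdorff_finite c r hr hr1⟩
  exact this.ne

lemma volume_P0_ne_top : volume (Pset c r 0) ≠ ⊤ := by
  have hsub : Pset c r 0 ⊆ Metric.ball (0 : E2) 3 := by
    intro p hp
    rcases hp with h | h
    · exact Metric.ball_subset_ball (by norm_num) h
    · simp only [Set.mem_iUnion] at h
      obtain ⟨τ, hτ, h⟩ := h
      have hτ0 : τ = 0 := le_antisymm hτ.2 hτ.1
      subst hτ0
      rw [Metric.mem_ball] at h ⊢
      have hd : dist (epnt (c + 0) 0) (0 : E2) = c := by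
        rw [zero_eq_epnt, dist_pt]
        simp only [epnt_zero, epnt_one, add_zero, sub_zero]
        rw [show c^2 + 0^2 = c^2 by ring, Real.sqrt_sq hc.le]
      have hc1 : c ≤ 1 := by nlinarith
      have hr1 : r ≤ 1 := by nlinarith
      calc dist p 0 ≤ dist p (epnt (c + 0) 0) + dist (epnt (c + 0) 0) (0 : E2) :=
            dist_triangle _ _ _
        _ < r + c := by rw [hd]; linarith
        _ ≤ 3 := by linarith
  exact ((measure_mono hsub).trans_lt measure_ball_lt_top).ne

lemma volume_P0_pos : 0 < volume (Pset c r 0) :=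
  lt_of_lt_of_le (Metric.measure_ball_pos volume (0 : E2) one_pos)
    (measure_mono Set.subset_union_left)

end finiteness

/-- `|𝒫_T| = |𝒫_0| + 2r₀T` and `P(𝒫_T) = P(𝒫_0) + 2T`; consequently
if `P(𝒫_0)/|𝒫_0| = 1/r₀`, then `P(𝒫_T)/|𝒫_T| = 1/r₀` for all `T ≥ 0`. -/
theorem pinocchio_ratio (θ₀ : ℝ) (hθ : θ₀ ∈ Set.Ioo 0 (Real.pi / 2))
    (r₀ : ℝ) (hr : r₀ = Real.sin θ₀) (T : ℝ) (hT : 0 ≤ T) :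
    volume (pinocchio θ₀ T) =
      volume (pinocchio θ₀ 0) + ENNReal.ofReal (2 * r₀ * T) ∧
    μH[1] (frontier (pinocchio θ₀ T)) =
      μH[1] (frontier (pinocchio θ₀ 0)) + ENNReal.ofReal (2 * T) ∧
    ((μH[1] (frontier (pinocchio θ₀ 0))).toReal /
        (volume (pinocchio θ₀ 0)).toReal = 1 / r₀ →
      (μH[1] (frontier (pinocchio θ₀ T))).toReal /
        (volume (pinocchio θ₀ T)).toReal = 1 / r₀) := by
  obtain ⟨hθ1, hθ2⟩ := hθ
  have hpi := Real.pi_pos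
  subst hr
  have hc : 0 < Real.cos θ₀ := Real.cos_pos_of_mem_Ioo ⟨by linarith, hθ2⟩
  have hrpos : 0 < Real.sin θ₀ := Real.sin_pos_of_pos_of_lt_pi hθ1 (by linarith)
  have hcr : (Real.cos θ₀)^2 + (Real.sin θ₀)^2 = 1 := Real.cos_sq_add_sin_sq θ₀
  have hPP : ∀ S : ℝ, pinocchio θ₀ S = Pset (Real.cos θ₀) (Real.sin θ₀) S := fun _ => rfl
  refine ⟨?_, ?_, ?_⟩
  · rw [hPP, hPP]
    exact volume_Pset hc hrpos hcr hT
  · rw [hPP, hPP]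
    exact hausdorff_Pset hc hrpos hcr hT
  · intro h
    simp only [hPP] at h ⊢
    have hvtop : volume (Pset (Real.cos θ₀) (Real.sin θ₀) 0) ≠ ⊤ :=
      volume_P0_ne_top hc hrpos hcr
    have hhtop : μH[(1:ℝ)] (frontier (Pset (Real.cos θ₀) (Real.sin θ₀) 0)) ≠ ⊤ :=
      hausdorff_P0_ne_top hc hrpos hcr
    have hvpos := volume_P0_pos hc hrpos hcr
    set A0 := (volume (Pset (Real.cos θ₀) (Real.sin θ₀) 0)).toReal with hA0def
    set P0 := (μH[(1:ℝ)] (frontier (Pset (Real.cos θ₀) (Real.sin θ₀) 0))).toReal with hP0def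
    have hA0 : 0 < A0 := ENNReal.toReal_pos hvpos.ne' hvtop
    have hVT : (volume (Pset (Real.cos θ₀) (Real.sin θ₀) T)).toReal =
        A0 + 2 * Real.sin θ₀ * T := by
      rw [volume_Pset hc hrpos hcr hT, ENNReal.toReal_add hvtop ENNReal.ofReal_ne_top,
        ENNReal.toReal_ofReal (by positivity)]
    have hHT : (μH[(1:ℝ)] (frontier (Pset (Real.cos θ₀) (Real.sin θ₀) T))).toReal =
        P0 + 2 * T := by
      rw [hausdorff_Pset hc hrpos hcr hT, ENNReal.toReal_add hhtop ENNReal.ofReal_ne_top,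
        ENNReal.toReal_ofReal (by positivity)]
    rw [hVT, hHT]
    have hrne : Real.sin θ₀ ≠ 0 := hrpos.ne'
    have hAne : A0 ≠ 0 := hA0.ne'
    have hden : A0 + 2 * Real.sin θ₀ * T ≠ 0 := by positivity
    field_simp at h ⊢
    linear_combination h
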